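/- For every icosian q = a + bi + cj + dk, the quaternionic norm ‖q‖² = a² + b² + c² + d² can be written uniquely as x + y√5 with x, y rational, and the Conway–Sloane norm |q|² := x + y is a nonnegative integer; moreover |q|² = 0 if and only if q = 0 (so the Conway–Sloane norm is positive definite on the icosians). -/

import Mathlib

noncomputable section

open scoped Quaternion

/-- The little golden ratio. -/
def φ : ℝ := (Real.sqrt 5 - 1) / 2

/-- The big golden ratio. -/
def Φ : ℝ := (Real.sqrt 5 + 1) / 2

/-- A real number is a sign if it is `1` or `-1`. -/
def IsSign (s : ℝ) : Prop := s = 1 ∨ s = -1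

/-- The coordinate vector of a quaternion `a + bi + cj + dk`. -/
def coords (q : ℍ[ℝ]) : Fin 4 → ℝ := ![q.re, q.imI, q.imJ, q.imK]

/-- The base coordinate vectors `(±1,0,0,0)`, `(±1/2,±1/2,±1/2,±1/2)`, `(0,±1/2,±φ/2,±Φ/2)`. -/
def baseVectors : Set (Fin 4 → ℝ) :=
  {v | (∃ s, IsSign s ∧ v = ![s, 0, 0, 0]) ∨
       (∃ s₀ s₁ s₂ s₃, IsSign s₀ ∧ IsSign s₁ ∧ IsSign s₂ ∧ IsSign s₃ ∧
          v = ![s₀ / 2, s₁ / 2, s₂ / 2, s₃ / 2]) ∨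
       (∃ s₁ s₂ s₃, IsSign s₁ ∧ IsSign s₂ ∧ IsSign s₃ ∧
          v = ![0, s₁ / 2, s₂ * φ / 2, s₃ * Φ / 2])}

/-- The binary icosahedral group: quaternions whose coordinate vector is obtained from a base
vector by an even permutation of the four coordinates. -/
def binaryIcosahedral : Set ℍ[ℝ] :=
  {q | ∃ v ∈ baseVectors, ∃ σ : Equiv.Perm (Fin 4),
        σ ∈ alternatingGroup (Fin 4) ∧ coords q = v ∘ σ}

/-- The icosian ring: the additive subgroup of the quaternions generated by the binary
icosahedral group. -/
def icosians : AddSubgroup ℍ[ℝ] := AddSubgroup.closure binaryIcosahedral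

/-- The squared quaternionic norm `a² + b² + c² + d²`. -/
def nsq (q : ℍ[ℝ]) : ℝ := q.re ^ 2 + q.imI ^ 2 + q.imJ ^ 2 + q.imK ^ 2

/-! ### Auxiliary development -/

/-- Congruence conditions cutting out (a superlattice of) the icosian lattice in the
integer coordinates `(a i + b i * √5)/4`. -/
def Cond (a b : Fin 4 → ℤ) : Prop :=
  (∀ i, 2 ∣ (a i + b i)) ∧
  2 ∣ (b 0 + b 1 + b 2 + b 3) ∧
  4 ∣ (a 2 + b 2 + a 3 + b 3 + 2 * b 1 + 2 * b 2) ∧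
  4 ∣ (a 1 + b 1 + a 3 + b 3 + 2 * b 2 + 2 * b 3) ∧
  4 ∣ (a 0 + b 0 + a 3 + b 3 + 2 * b 1 + 2 * b 3)

instance (a b : Fin 4 → ℤ) : Decidable (Cond a b) := by unfold Cond; infer_instance

lemma coords_add (p q : ℍ[ℝ]) (i : Fin 4) : coords (p + q) i = coords p i + coords q i := by
  fin_cases i <;> simp [coords]

lemma coords_neg (p : ℍ[ℝ]) (i : Fin 4) : coords (-p) i = -coords p i := by
  fin_cases i <;> simp [coords]

/-- The ambient lattice. -/
def IcoLat : AddSubgroup ℍ[ℝ] where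
  carrier := {q | ∃ a b : Fin 4 → ℤ,
      (∀ i, coords q i = ((a i : ℝ) + (b i : ℝ) * Real.sqrt 5) / 4) ∧ Cond a b}
  zero_mem' := by
    refine ⟨fun _ => 0, fun _ => 0, fun i => ?_, by decide⟩
    fin_cases i <;> simp [coords]
  add_mem' := by
    rintro p q ⟨a, b, hab, ha1, ha2, ha3, ha4, ha5⟩ ⟨c, d, hcd, hc1, hc2, hc3, hc4, hc5⟩
    refine ⟨fun i => a i + c i, fun i => b i + d i, fun i => ?_, fun i => ?_, ?_, ?_, ?_, ?_⟩
    · rw [coords_add, hab i, hcd i]; push_cast; ring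
    · have := ha1 i; have := hc1 i; beta_reduce; omega
    · beta_reduce; omega
    · beta_reduce; omega
    · beta_reduce; omega
    · beta_reduce; omega
  neg_mem' := by
    rintro p ⟨a, b, hab, ha1, ha2, ha3, ha4, ha5⟩
    refine ⟨fun i => -a i, fun i => -b i, fun i => ?_, fun i => ?_, ?_, ?_, ?_, ?_⟩
    · rw [coords_neg, hab i]; push_cast; ring
    · have := ha1 i; beta_reduce; omega
    · beta_reduce; omega
    · beta_reduce; omega
    · beta_reduce; omega
    · beta_reduce; omega

/-- `±1` as an integer, indexed by a boolean. -/
def ν (e : Bool) : ℤ := if e then 1 else -1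

lemma sign_bool {s : ℝ} (hs : IsSign s) : ∃ e : Bool, s = ((ν e : ℤ) : ℝ) := by
  rcases hs with rfl | rfl
  · exact ⟨true, by norm_num [ν]⟩
  · exact ⟨false, by norm_num [ν]⟩

lemma cond1 : ∀ (e : Bool) (σ : Equiv.Perm (Fin 4)),
    Cond (![4 * ν e, 0, 0, 0] ∘ σ) (![0, 0, 0, 0] ∘ σ) := by decide

lemma cond2 : ∀ (e₀ e₁ e₂ e₃ : Bool) (σ : Equiv.Perm (Fin 4)),
    Cond (![2 * ν e₀, 2 * ν e₁, 2 * ν e₂, 2 * ν e₃] ∘ σ) (![0, 0, 0, 0] ∘ σ) := by decide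

lemma cond3 : ∀ (e₁ e₂ e₃ : Bool) (σ : Equiv.Perm (Fin 4)), Equiv.Perm.sign σ = 1 →
    Cond (![0, 2 * ν e₁, -ν e₂, ν e₃] ∘ σ) (![0, 0, ν e₂, ν e₃] ∘ σ) := by decide

lemma icosahedral_subset : binaryIcosahedral ⊆ (IcoLat : Set ℍ[ℝ]) := by
  rintro q ⟨v, hv, σ, hσ, hc⟩
  rw [Equiv.Perm.mem_alternatingGroup] at hσ
  rcases hv with ⟨s, hs, rfl⟩ | ⟨s₀, s₁, s₂, s₃, h₀, h₁, h₂, h₃, rfl⟩ |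
      ⟨s₁, s₂, s₃, h₁, h₂, h₃, rfl⟩
  · obtain ⟨e, rfl⟩ := sign_bool hs
    refine ⟨![4 * ν e, 0, 0, 0] ∘ σ, ![0, 0, 0, 0] ∘ σ, fun i => ?_, cond1 e σ⟩
    refine (congrFun hc i).trans ?_
    simp only [Function.comp_apply]
    generalize σ i = j
    fin_cases j <;> simp <;> push_cast <;> ring
  · obtain ⟨e₀, rfl⟩ := sign_bool h₀
    obtain ⟨e₁, rfl⟩ := sign_bool h₁
    obtain ⟨e₂, rfl⟩ := sign_bool h₂
    obtain ⟨e₃, rfl⟩ := sign_bool h₃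
    refine ⟨![2 * ν e₀, 2 * ν e₁, 2 * ν e₂, 2 * ν e₃] ∘ σ, ![0, 0, 0, 0] ∘ σ, fun i => ?_,
      cond2 e₀ e₁ e₂ e₃ σ⟩
    refine (congrFun hc i).trans ?_
    simp only [Function.comp_apply]
    generalize σ i = j
    fin_cases j <;> simp <;> push_cast <;> ring
  · obtain ⟨e₁, rfl⟩ := sign_bool h₁
    obtain ⟨e₂, rfl⟩ := sign_bool h₂
    obtain ⟨e₃, rfl⟩ := sign_bool h₃
    refine ⟨![0, 2 * ν e₁, -ν e₂, ν e₃] ∘ σ, ![0, 0, ν e₂, ν e₃] ∘ σ, fun i => ?_,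
      cond3 e₁ e₂ e₃ σ hσ⟩
    refine (congrFun hc i).trans ?_
    simp only [Function.comp_apply]
    generalize σ i = j
    fin_cases j <;> simp [φ, Φ] <;> push_cast <;> ring

lemma sqrt5_irrational : Irrational (Real.sqrt 5) := by
  simpa using (by norm_num : Nat.Prime 5).irrational_sqrt

lemma sqrt5_rat_eq {x y x' y' : ℚ} (h : (x : ℝ) + y * Real.sqrt 5 = x' + y' * Real.sqrt 5) :
    x = x' ∧ y = y' := by
  by_cases hy : y = y'
  · subst hy
    have : (x : ℝ) = x' := by linarith
    exact ⟨by exact_mod_cast this, rfl⟩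
  · exfalso
    have hne : ((y : ℝ)) - y' ≠ 0 := by
      intro h0
      exact hy (by exact_mod_cast sub_eq_zero.mp h0)
    have : Real.sqrt 5 = (((x' - x) / (y - y') : ℚ) : ℝ) := by
      push_cast
      rw [eq_div_iff hne]
      ring_nf
      nlinarith [h]
    exact sqrt5_irrational ⟨_, this.symm⟩

lemma int_sqrt5 {A B : ℤ} (h : (A : ℝ) + B * Real.sqrt 5 = 0) : A = 0 ∧ B = 0 := by
  have := sqrt5_rat_eq (x := (A : ℚ)) (y := (B : ℚ)) (x' := 0) (y' := 0)
    (by push_cast; simpa using h)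
  exact ⟨by exact_mod_cast this.1, by exact_mod_cast this.2⟩

lemma sq_sub_mod_sq (x : ℤ) : ∃ t, x ^ 2 - (x % 2) ^ 2 = 4 * t := by
  have hx : x = 2 * (x / 2) + x % 2 := (Int.mul_ediv_add_emod x 2).symm
  exact ⟨(x / 2) ^ 2 + (x / 2) * (x % 2), by linear_combination (x + x % 2 + 2 * (x / 2)) * hx⟩

set_option maxHeartbeats 1000000 in
lemma hammingZ (r0 r1 r2 r3 s0 s1 s2 s3 : ℤ)
    (hr0 : r0 = 0 ∨ r0 = 1) (hr1 : r1 = 0 ∨ r1 = 1) (hr2 : r2 = 0 ∨ r2 = 1)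
    (hr3 : r3 = 0 ∨ r3 = 1) (hs0 : s0 = 0 ∨ s0 = 1) (hs1 : s1 = 0 ∨ s1 = 1)
    (hs2 : s2 = 0 ∨ s2 = 1) (hs3 : s3 = 0 ∨ s3 = 1)
    (h1 : 2 ∣ (s0 + s1 + s2 + s3)) (h2 : 2 ∣ (r2 + r3 + s1 + s2))
    (h3 : 2 ∣ (r1 + r3 + s2 + s3)) (h4 : 2 ∣ (r0 + r3 + s1 + s3)) :
    4 ∣ (r0 + r1 + r2 + r3 + s0 + s1 + s2 + s3) := by
  rcases hr0 with rfl | rfl <;> rcases hr1 with rfl | rfl <;> rcases hr2 with rfl | rfl <;>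
    rcases hr3 with rfl | rfl <;> rcases hs0 with rfl | rfl <;> rcases hs1 with rfl | rfl <;>
    rcases hs2 with rfl | rfl <;> rcases hs3 with rfl | rfl <;> omega

lemma mod_sq (x : ℤ) : (x % 2) ^ 2 = x % 2 := by
  have : x % 2 = 0 ∨ x % 2 = 1 := by omega
  rcases this with h | h <;> rw [h] <;> ring

theorem stmt6 :
    ∀ q ∈ icosians, ∃ x y : ℚ,
      nsq q = (x : ℝ) + (y : ℝ) * Real.sqrt 5 ∧
      (∀ x' y' : ℚ, nsq q = (x' : ℝ) + (y' : ℝ) * Real.sqrt 5 → x' = x ∧ y' = y) ∧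
      (∃ n : ℕ, x + y = (n : ℚ)) ∧
      (x + y = 0 ↔ q = 0) := by
  intro q hq
  have hqL : q ∈ IcoLat := (AddSubgroup.closure_le IcoLat).mpr icosahedral_subset hq
  obtain ⟨a, b, hco, hpar, hc1, hc2, hc3, hc4⟩ := hqL
  obtain ⟨d0, hd0⟩ := hpar 0
  obtain ⟨d1, hd1⟩ := hpar 1
  obtain ⟨d2, hd2⟩ := hpar 2
  obtain ⟨d3, hd3⟩ := hpar 3
  set X : ℤ := a 0 ^ 2 + a 1 ^ 2 + a 2 ^ 2 + a 3 ^ 2 +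
      5 * (b 0 ^ 2 + b 1 ^ 2 + b 2 ^ 2 + b 3 ^ 2) with hX
  set Y : ℤ := 2 * (a 0 * b 0 + a 1 * b 1 + a 2 * b 2 + a 3 * b 3) with hY
  have h5 : Real.sqrt 5 ^ 2 = 5 := Real.sq_sqrt (by norm_num)
  have hnsq : nsq q = (coords q 0) ^ 2 + (coords q 1) ^ 2 + (coords q 2) ^ 2 +
      (coords q 3) ^ 2 := by
    simp [nsq, coords]
  have hxy : nsq q = (((X : ℚ) / 16 : ℚ) : ℝ) + (((Y : ℚ) / 16 : ℚ) : ℝ) * Real.sqrt 5 := by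
    rw [hnsq, hco 0, hco 1, hco 2, hco 3, hX, hY]
    push_cast
    linear_combination (((b 0 : ℝ)) ^ 2 + (b 1 : ℝ) ^ 2 + (b 2 : ℝ) ^ 2 + (b 3 : ℝ) ^ 2) / 16 * h5
  refine ⟨(X : ℚ) / 16, (Y : ℚ) / 16, hxy, fun x' y' h' => sqrt5_rat_eq (h'.symm.trans hxy), ?_, ?_⟩
  · -- x + y is a nonnegative integer
    have hw : 4 ∣ (d0 % 2 + d1 % 2 + d2 % 2 + d3 % 2 +
        b 0 % 2 + b 1 % 2 + b 2 % 2 + b 3 % 2) := by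
      apply hammingZ <;> omega
    obtain ⟨w, hw'⟩ := hw
    obtain ⟨t0, ht0⟩ := sq_sub_mod_sq d0
    obtain ⟨t1, ht1⟩ := sq_sub_mod_sq d1
    obtain ⟨t2, ht2⟩ := sq_sub_mod_sq d2
    obtain ⟨t3, ht3⟩ := sq_sub_mod_sq d3
    obtain ⟨u0, hu0⟩ := sq_sub_mod_sq (b 0)
    obtain ⟨u1, hu1⟩ := sq_sub_mod_sq (b 1)
    obtain ⟨u2, hu2⟩ := sq_sub_mod_sq (b 2)
    obtain ⟨u3, hu3⟩ := sq_sub_mod_sq (b 3)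
    have key4 : X + Y = 16 * (t0 + t1 + t2 + t3 + u0 + u1 + u2 + u3 + w) := by
      rw [hX, hY]
      linear_combination (4 : ℤ) * (ht0 + ht1 + ht2 + ht3 + hu0 + hu1 + hu2 + hu3) +
        4 * hw' + 4 * (mod_sq d0 + mod_sq d1 + mod_sq d2 + mod_sq d3 +
          mod_sq (b 0) + mod_sq (b 1) + mod_sq (b 2) + mod_sq (b 3)) +
        (a 0 + b 0 + 2 * d0) * hd0 + (a 1 + b 1 + 2 * d1) * hd1 +
        (a 2 + b 2 + 2 * d2) * hd2 + (a 3 + b 3 + 2 * d3) * hd3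
    have hnn : 0 ≤ X + Y := by
      rw [hX, hY]
      linarith [sq_nonneg (a 0 + b 0), sq_nonneg (a 1 + b 1), sq_nonneg (a 2 + b 2),
        sq_nonneg (a 3 + b 3), sq_nonneg (b 0), sq_nonneg (b 1), sq_nonneg (b 2), sq_nonneg (b 3)]
    set m : ℤ := t0 + t1 + t2 + t3 + u0 + u1 + u2 + u3 + w with hm
    have hm0 : 0 ≤ m := by omega
    refine ⟨m.toNat, ?_⟩
    have hmn : ((m.toNat : ℤ) : ℚ) = (m : ℚ) := by exact_mod_cast Int.toNat_of_nonneg hm0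
    rw [← add_div]
    rw [show ((X : ℚ) + (Y : ℚ)) = ((X + Y : ℤ) : ℚ) by push_cast; ring, key4]
    rw [show (((16 * m : ℤ) : ℚ)) / 16 = (m : ℚ) by push_cast; ring]
    exact_mod_cast (Int.toNat_of_nonneg hm0).symm
  · constructor
    · intro h
      have hXY : X + Y = 0 := by
        have : ((X + Y : ℤ) : ℚ) = 0 := by
          push_cast
          field_simp at h
          exact_mod_cast h
        exact_mod_cast this
      rw [hX, hY] at hXY
      have h1 : (a 0 + b 0) ^ 2 + (a 1 + b 1) ^ 2 + (a 2 + b 2) ^ 2 + (a 3 + b 3) ^ 2 +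
          4 * (b 0 ^ 2 + b 1 ^ 2 + b 2 ^ 2 + b 3 ^ 2) = 0 := by linear_combination hXY
      have hsq := fun (x : ℤ) => sq_nonneg x
      have f0 : a 0 + b 0 = 0 := sq_eq_zero_iff.mp (le_antisymm (by
        linarith [hsq (a 1 + b 1), hsq (a 2 + b 2), hsq (a 3 + b 3), hsq (b 0), hsq (b 1),
          hsq (b 2), hsq (b 3)]) (sq_nonneg _))
      have f1 : a 1 + b 1 = 0 := sq_eq_zero_iff.mp (le_antisymm (by
        linarith [hsq (a 0 + b 0), hsq (a 2 + b 2), hsq (a 3 + b 3), hsq (b 0), hsq (b 1),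
          hsq (b 2), hsq (b 3)]) (sq_nonneg _))
      have f2 : a 2 + b 2 = 0 := sq_eq_zero_iff.mp (le_antisymm (by
        linarith [hsq (a 0 + b 0), hsq (a 1 + b 1), hsq (a 3 + b 3), hsq (b 0), hsq (b 1),
          hsq (b 2), hsq (b 3)]) (sq_nonneg _))
      have f3 : a 3 + b 3 = 0 := sq_eq_zero_iff.mp (le_antisymm (by
        linarith [hsq (a 0 + b 0), hsq (a 1 + b 1), hsq (a 2 + b 2), hsq (b 0), hsq (b 1),
          hsq (b 2), hsq (b 3)]) (sq_nonneg _))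
      have g0 : b 0 = 0 := sq_eq_zero_iff.mp (le_antisymm (by
        linarith [hsq (a 0 + b 0), hsq (a 1 + b 1), hsq (a 2 + b 2), hsq (a 3 + b 3),
          hsq (b 1), hsq (b 2), hsq (b 3)]) (sq_nonneg _))
      have g1 : b 1 = 0 := sq_eq_zero_iff.mp (le_antisymm (by
        linarith [hsq (a 0 + b 0), hsq (a 1 + b 1), hsq (a 2 + b 2), hsq (a 3 + b 3),
          hsq (b 0), hsq (b 2), hsq (b 3)]) (sq_nonneg _))
      have g2 : b 2 = 0 := sq_eq_zero_iff.mp (le_antisymm (by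
        linarith [hsq (a 0 + b 0), hsq (a 1 + b 1), hsq (a 2 + b 2), hsq (a 3 + b 3),
          hsq (b 0), hsq (b 1), hsq (b 3)]) (sq_nonneg _))
      have g3 : b 3 = 0 := sq_eq_zero_iff.mp (le_antisymm (by
        linarith [hsq (a 0 + b 0), hsq (a 1 + b 1), hsq (a 2 + b 2), hsq (a 3 + b 3),
          hsq (b 0), hsq (b 1), hsq (b 2)]) (sq_nonneg _))
      have ka0 : a 0 = 0 := by linarith
      have ka1 : a 1 = 0 := by linarith
      have ka2 : a 2 = 0 := by linarith
      have ka3 : a 3 = 0 := by linarith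
      apply Quaternion.ext
      · have h := hco 0; rw [ka0, g0] at h; simpa [coords] using h
      · have h := hco 1; rw [ka1, g1] at h; simpa [coords] using h
      · have h := hco 2; rw [ka2, g2] at h; simpa [coords] using h
      · have h := hco 3; rw [ka3, g3] at h; simpa [coords] using h
    · rintro rfl
      have hz : ∀ i, ((a i : ℝ) + (b i : ℝ) * Real.sqrt 5) / 4 = 0 := by
        intro i
        rw [← hco i]
        fin_cases i <;> simp [coords]
      have hab : ∀ i, a i = 0 ∧ b i = 0 := by
        intro i
        have h := hz i
        have : (a i : ℝ) + (b i : ℝ) * Real.sqrt 5 = 0 := by linarith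
        exact int_sqrt5 this
      rw [hX, hY, (hab 0).1, (hab 1).1, (hab 2).1, (hab 3).1,
        (hab 0).2, (hab 1).2, (hab 2).2, (hab 3).2]
      norm_num
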